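/- For k ≥ 0 and m ≥ 0, T(3, m, 2, k) = 2^k · C(m − k, k); i.e., the number of ways to place k non-overlapping 2×2 squares in a 3×m rectangle is 2^k times a binomial coefficient. -/

import Mathlib

/-- The set of cells covered by an `s×s` square whose corner is at `p`. -/
def squareCells (s : ℕ) (p : ℕ × ℕ) : Finset (ℕ × ℕ) :=
  Finset.Ico p.1 (p.1 + s) ×ˢ Finset.Ico p.2 (p.2 + s)

/-- `T n m s k`: the number of ways to place `k` pairwise non-overlapping axis-aligned
`s×s` squares at integer positions inside an `n×m` rectangle (the remaining cells
being covered by `1×1` squares). -/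
noncomputable def T (n m s k : ℕ) : ℕ :=
  Set.ncard {S : Finset (ℕ × ℕ) |
    S.card = k ∧
    (∀ p ∈ S, p.1 + s ≤ n ∧ p.2 + s ≤ m) ∧
    (S : Set (ℕ × ℕ)).Pairwise fun p q => Disjoint (squareCells s p) (squareCells s q)}

/-- `Ttot n m s`: total number of tilings of the `n×m` rectangle by `1×1` and `s×s`
squares (summing over all possible numbers of `s×s` squares). -/
noncomputable def Ttot (n m s : ℕ) : ℕ := ∑ k ∈ Finset.range (n * m + 1), T n m s k

def Ok (m k : ℕ) (S : Finset (ℕ × ℕ)) : Prop :=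
  S.card = k ∧
  (∀ p ∈ S, p.1 + 2 ≤ 3 ∧ p.2 + 2 ≤ m) ∧
  (S : Set (ℕ × ℕ)).Pairwise fun p q => Disjoint (squareCells 2 p) (squareCells 2 q)

lemma overlap {p q : ℕ × ℕ} (hp : p.1 ≤ 1) (hq : q.1 ≤ 1)
    (h1 : p.2 ≤ q.2 + 1) (h2 : q.2 ≤ p.2 + 1) :
    ¬ Disjoint (squareCells 2 p) (squareCells 2 q) := by
  rw [Finset.not_disjoint_iff]
  refine ⟨(1, max p.2 q.2), ?_, ?_⟩ <;>
    simp [squareCells, Finset.mem_product, Finset.mem_Ico] <;> omega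

lemma disj {p q : ℕ × ℕ} (h : p.2 + 2 ≤ q.2) :
    Disjoint (squareCells 2 p) (squareCells 2 q) := by
  rw [Finset.disjoint_left]
  intro a ha hb
  simp [squareCells, Finset.mem_product, Finset.mem_Ico] at ha hb
  omega

lemma ok_finite (m k : ℕ) : {S : Finset (ℕ × ℕ) | Ok m k S}.Finite := by
  apply Set.Finite.subset ((Finset.range 3 ×ˢ Finset.range m).powerset : Finset (Finset (ℕ×ℕ))).finite_toSet
  intro S hS
  simp only [Finset.coe_powerset, Set.mem_preimage, Set.mem_powerset_iff, Finset.coe_product]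
  intro p hp
  have := hS.2.1 p hp
  simp only [Set.mem_prod, Set.mem_Iio, Finset.coe_range]
  omega

lemma ok_zero (m : ℕ) : {S : Finset (ℕ × ℕ) | Ok m 0 S} = {∅} := by
  ext S
  simp only [Set.mem_setOf_eq, Set.mem_singleton_iff, Ok, Finset.card_eq_zero]
  constructor
  · exact fun h => h.1
  · rintro rfl
    simp

lemma ok_small (m k : ℕ) (hm : m ≤ 1) (hk : 1 ≤ k) :
    {S : Finset (ℕ × ℕ) | Ok m k S} = ∅ := by
  ext S
  simp only [Set.mem_setOf_eq, Set.mem_empty_iff_false, iff_false, Ok]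
  rintro ⟨hcard, hb, -⟩
  have : S.Nonempty := Finset.card_pos.mp (by omega)
  obtain ⟨p, hp⟩ := this
  have := hb p hp
  omega

lemma not_mem_of_ok {m k : ℕ} {S : Finset (ℕ × ℕ)} (hS : Ok m k S) (r : ℕ) :
    (r, m) ∉ S := by
  intro h
  have := hS.2.1 _ h
  omega

lemma ok_insert {m k r : ℕ} (hr : r ≤ 1) {S : Finset (ℕ × ℕ)} (hS : Ok m k S) :
    Ok (m+2) (k+1) (insert (r, m) S) := by
  obtain ⟨hcard, hb, hpw⟩ := hS
  have hnm : (r, m) ∉ S := not_mem_of_ok ⟨hcard, hb, hpw⟩ r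
  refine ⟨by rw [Finset.card_insert_of_notMem hnm, hcard], ?_, ?_⟩
  · intro p hp
    rcases Finset.mem_insert.mp hp with rfl | hp
    · simp; omega
    · have := hb p hp; omega
  · rw [Finset.coe_insert]
    haveI : Std.Symm (fun p q : ℕ × ℕ => Disjoint (squareCells 2 p) (squareCells 2 q)) :=
      ⟨fun p q h => h.symm⟩
    rw [Set.pairwise_insert_of_symm]
    refine ⟨hpw, fun q hq _ => ?_⟩
    exact (disj (show q.2 + 2 ≤ (r, m).2 from (hb q hq).2)).symm

lemma ok_erase {m k : ℕ} {S : Finset (ℕ × ℕ)} {p : ℕ × ℕ}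
    (hS : Ok (m+2) (k+1) S) (hp : p ∈ S) (hpm : p.2 = m) :
    Ok m k (S.erase p) := by
  obtain ⟨hcard, hb, hpw⟩ := hS
  refine ⟨by simp [Finset.card_erase_of_mem hp, hcard], ?_, ?_⟩
  · intro q hq
    have hqS := Finset.mem_of_mem_erase hq
    have hqp : q ≠ p := Finset.ne_of_mem_erase hq
    have hbq := hb q hqS
    have hbp := hb p hp
    refine ⟨by omega, ?_⟩
    by_contra hc
    have hdisj := hpw (Finset.mem_coe.mpr hp) (Finset.mem_coe.mpr hqS) (fun h => hqp h.symm)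
    exact overlap (by omega) (by omega) (by omega) (by omega) hdisj
  · exact hpw.mono (by simp [Finset.erase_subset])

lemma ok_decomp (m k : ℕ) :
    {S : Finset (ℕ × ℕ) | Ok (m+2) (k+1) S} =
      {S : Finset (ℕ × ℕ) | Ok (m+1) (k+1) S} ∪
        ((insert (0, m) '' {S : Finset (ℕ × ℕ) | Ok m k S}) ∪
         (insert (1, m) '' {S : Finset (ℕ × ℕ) | Ok m k S})) := by
  ext S
  simp only [Set.mem_setOf_eq, Set.mem_union, Set.mem_image]
  constructor
  · intro hS
    by_cases h : ∃ p ∈ S, p.2 = m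
    · obtain ⟨p, hp, hpm⟩ := h
      have hr : p.1 ≤ 1 := by have := hS.2.1 p hp; omega
      have hpe : p = (0, m) ∨ p = (1, m) := by
        rcases p with ⟨a, b⟩
        simp only [Prod.mk.injEq]
        simp only at hpm
        omega
      rcases hpe with rfl | rfl
      · exact Or.inr (Or.inl ⟨S.erase (0, m), ok_erase hS hp rfl, Finset.insert_erase hp⟩)
      · exact Or.inr (Or.inr ⟨S.erase (1, m), ok_erase hS hp rfl, Finset.insert_erase hp⟩)
    · push_neg at h
      left
      obtain ⟨hcard, hb, hpw⟩ := hS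
      refine ⟨hcard, fun p hp => ?_, hpw⟩
      have := hb p hp
      have := h p hp
      omega
  · rintro (hS | ⟨S', hS', rfl⟩ | ⟨S', hS', rfl⟩)
    · obtain ⟨hcard, hb, hpw⟩ := hS
      exact ⟨hcard, fun p hp => by have := hb p hp; omega, hpw⟩
    · exact ok_insert (by norm_num) hS'
    · exact ok_insert le_rfl hS'

lemma insert_injOn (r m k : ℕ) :
    Set.InjOn (insert (r, m)) {S : Finset (ℕ × ℕ) | Ok m k S} := by
  intro S hS S' hS' h
  have h1 : (r, m) ∉ S := not_mem_of_ok hS r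
  have h2 : (r, m) ∉ S' := not_mem_of_ok hS' r
  rw [← Finset.erase_insert h1, ← Finset.erase_insert h2, h]

lemma ncard_rec (m k : ℕ) :
    {S : Finset (ℕ × ℕ) | Ok (m+2) (k+1) S}.ncard =
      {S : Finset (ℕ × ℕ) | Ok (m+1) (k+1) S}.ncard +
        2 * {S : Finset (ℕ × ℕ) | Ok m k S}.ncard := by
  have hfA := ok_finite (m+1) (k+1)
  have hfS := ok_finite m k
  have hf0 := hfS.image (insert (0, m))
  have hf1 := hfS.image (insert (1, m))
  have hd01 : Disjoint (insert (0, m) '' {S : Finset (ℕ × ℕ) | Ok m k S})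
      (insert (1, m) '' {S : Finset (ℕ × ℕ) | Ok m k S}) := by
    rw [Set.disjoint_left]
    rintro S ⟨S0, hS0, rfl⟩ ⟨S1, hS1, hS⟩
    have : (1, m) ∈ insert (0, m) S0 := by rw [← hS]; exact Finset.mem_insert_self _ _
    rcases Finset.mem_insert.mp this with h | h
    · simp at h
    · exact not_mem_of_ok hS0 1 h
  have hdA : ∀ r, Disjoint {S : Finset (ℕ × ℕ) | Ok (m+1) (k+1) S}
      (insert (r, m) '' {S : Finset (ℕ × ℕ) | Ok m k S}) := by
    intro r
    rw [Set.disjoint_left]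
    rintro S hS ⟨S', hS', rfl⟩
    have := hS.2.1 (r, m) (Finset.mem_insert_self _ _)
    omega
  rw [ok_decomp, Set.ncard_union_eq (Set.disjoint_union_right.mpr ⟨hdA 0, hdA 1⟩) hfA (hf0.union hf1),
    Set.ncard_union_eq hd01 hf0 hf1,
    Set.ncard_image_of_injOn (insert_injOn 0 m k),
    Set.ncard_image_of_injOn (insert_injOn 1 m k)]
  ring

lemma arith (m k : ℕ) :
    2 ^ (k+1) * Nat.choose (m + 2 - (k+1)) (k+1) =
      2 ^ (k+1) * Nat.choose (m + 1 - (k+1)) (k+1) + 2 * (2 ^ k * Nat.choose (m - k) k) := by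
  rcases le_or_gt k m with h | h
  · have e1 : m + 2 - (k+1) = (m - k) + 1 := by omega
    have e2 : m + 1 - (k+1) = m - k := by omega
    rw [e1, e2, Nat.choose_succ_succ]
    ring
  · have e1 : m + 2 - (k+1) = 0 := by omega
    have e2 : m + 1 - (k+1) = 0 := by omega
    have e3 : m - k = 0 := by omega
    rw [e1, e2, e3, Nat.choose_eq_zero_of_lt (show 0 < k + 1 by omega),
      Nat.choose_eq_zero_of_lt (show 0 < k by omega)]
    ring

theorem stmt_8 (m k : ℕ) :
    T 3 m 2 k = 2 ^ k * Nat.choose (m - k) k := by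
  have hT : ∀ m k, T 3 m 2 k = {S : Finset (ℕ × ℕ) | Ok m k S}.ncard := fun _ _ => rfl
  induction m using Nat.strong_induction_on generalizing k with
  | _ m ih =>
    rcases k with _ | k
    · rw [hT, ok_zero]
      simp
    · rcases m with _ | _ | m
      · rw [hT, ok_small 0 (k+1) (by omega) (by omega), Set.ncard_empty,
          Nat.choose_eq_zero_of_lt (by omega)]
        ring
      · rw [hT, ok_small 1 (k+1) (by omega) (by omega), Set.ncard_empty,
          Nat.choose_eq_zero_of_lt (by omega)]
        ring
      · rw [hT, ncard_rec, ← hT, ← hT, ih (m+1) (by omega) (k+1), ih m (by omega) k]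
        exact (arith m k).symm
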